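/- For the (α,β)-dynamics with a proper potential f, a degree-like function g, and an arbitrary scheduler subject to the fairness condition, the dynamics stabilizes: there exists a time t such that G(t') = G(t) for all t' ≥ t. -/
import Mathlib

open Finset

section Aux
variable {V : Type*}

def delE (G : ℕ → SimpleGraph V) (t : ℕ) (u v : V) : Prop :=
  (G t).Adj u v ∧ ¬ (G (t+1)).Adj u v

def addE (G : ℕ → SimpleGraph V) (t : ℕ) (u v : V) : Prop :=
  ¬ (G t).Adj u v ∧ (G (t+1)).Adj u v

def chgE (G : ℕ → SimpleGraph V) (t : ℕ) (u v : V) : Prop :=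
  ¬ ((G (t+1)).Adj u v ↔ (G t).Adj u v)

def delAt (G : ℕ → SimpleGraph V) (t : ℕ) (u : V) : Prop := ∃ x, delE G t u x

def addAt (G : ℕ → SimpleGraph V) (t : ℕ) (u : V) : Prop := ∃ x, addE G t u x

lemma pigeon {ι : Type*} [Fintype ι] {p : ι → ℕ → Prop}
    (h : ∀ T, ∃ t, T ≤ t ∧ ∃ i, p i t) : ∃ i, ∀ T, ∃ t, T ≤ t ∧ p i t := by
  by_contra hc
  push_neg at hc
  choose T hT using hc
  obtain ⟨t, ht, i, hpi⟩ := h (Finset.univ.sup T)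
  exact hT i t (le_trans (Finset.le_sup (mem_univ i)) ht) hpi

lemma evAll {ι : Type*} [Fintype ι] {q : ι → ℕ → Prop}
    (h : ∀ i, ∃ T, ∀ t, T ≤ t → q i t) : ∃ T, ∀ t, T ≤ t → ∀ i, q i t := by
  choose T hT using h
  exact ⟨Finset.univ.sup T, fun t ht i => hT i t (le_trans (Finset.le_sup (mem_univ i)) ht)⟩

lemma io_chg_del (G : ℕ → SimpleGraph V) (u v : V)
    (h : ∀ T, ∃ t, T ≤ t ∧ chgE G t u v) : ∀ T, ∃ t, T ≤ t ∧ delE G t u v := by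
  intro T
  by_contra hno
  push_neg at hno
  obtain ⟨t₁, ht₁, hc₁⟩ := h T
  have hadj1 : (G (t₁+1)).Adj u v := by
    by_cases hA : (G t₁).Adj u v
    · exfalso
      by_cases hB : (G (t₁+1)).Adj u v
      · exact hc₁ (iff_of_true hB hA)
      · exact hno t₁ ht₁ ⟨hA, hB⟩
    · by_cases hB : (G (t₁+1)).Adj u v
      · exact hB
      · exact absurd (iff_of_false hB hA) hc₁
  have hup : ∀ s, t₁ + 1 ≤ s → (G s).Adj u v := by
    intro s hs
    induction s, hs using Nat.le_induction with
    | base => exact hadj1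
    | succ n hn ih =>
      by_contra hB
      exact hno n (ht₁.trans (Nat.le_of_succ_le hn)) ⟨ih, hB⟩
  obtain ⟨t₂, ht₂, hc₂⟩ := h (t₁+1)
  exact hc₂ (iff_of_true (hup (t₂+1) (ht₂.trans (Nat.le_succ _))) (hup t₂ ht₂))

lemma io_del_add (G : ℕ → SimpleGraph V) (u v : V)
    (h : ∀ T, ∃ t, T ≤ t ∧ delE G t u v) : ∀ T, ∃ t, T ≤ t ∧ addE G t u v := by
  intro T
  by_contra hno
  push_neg at hno
  obtain ⟨t₁, ht₁, hd₁⟩ := h T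
  have hdown : ∀ s, t₁ + 1 ≤ s → ¬ (G s).Adj u v := by
    intro s hs
    induction s, hs using Nat.le_induction with
    | base => exact hd₁.2
    | succ n hn ih =>
      intro hB
      exact hno n (ht₁.trans (Nat.le_of_succ_le hn)) ⟨ih, hB⟩
  obtain ⟨t₂, ht₂, hd₂⟩ := h (t₁+1)
  exact hdown t₂ ht₂ hd₂.1

lemma WmonoRun (g : Set V → ℝ) (hg : ∀ N N' : Set V, N ⊆ N' → g N ≤ g N')
    (G : ℕ → SimpleGraph V) (u : V) (t : ℕ) :
    ∀ r, t ≤ r → (∀ s, t ≤ s → s < r → ¬ delAt G s u) →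
      g ((G t).neighborSet u) ≤ g ((G r).neighborSet u) := by
  intro r hr
  induction r, hr using Nat.le_induction with
  | base => exact fun _ => le_rfl
  | succ n hn ih =>
    intro hno
    refine le_trans (ih fun s h1 h2 => hno s h1 (h2.trans (Nat.lt_succ_self n))) ?_
    apply hg
    intro x hx
    simp only [SimpleGraph.mem_neighborSet] at hx ⊢
    by_contra hx1
    exact hno n hn (Nat.lt_succ_self n) ⟨x, hx, hx1⟩

lemma WantiRun (g : Set V → ℝ) (hg : ∀ N N' : Set V, N ⊆ N' → g N ≤ g N')
    (G : ℕ → SimpleGraph V) (u : V) (t : ℕ) :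
    ∀ r, t ≤ r → (∀ s, t ≤ s → s < r → ¬ addAt G s u) →
      g ((G r).neighborSet u) ≤ g ((G t).neighborSet u) := by
  intro r hr
  induction r, hr using Nat.le_induction with
  | base => exact fun _ => le_rfl
  | succ n hn ih =>
    intro hno
    refine le_trans ?_ (ih fun s h1 h2 => hno s h1 (h2.trans (Nat.lt_succ_self n)))
    apply hg
    intro x hx
    simp only [SimpleGraph.mem_neighborSet] at hx ⊢
    by_contra hx1
    exact hno n hn (Nat.lt_succ_self n) ⟨x, hx1, hx⟩

end Aux

/-- the (α,β)-dynamics with proper potential f, degree-like function g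
and an arbitrary fair scheduler stabilizes. -/
theorem thresholdDynamics_stabilizes {V : Type*} [Fintype V]
    (f : ℝ → ℝ → ℝ)
    (hfsym : ∀ x y, f x y = f y x)
    (hfmono : ∀ x₁ x₂ y₁ y₂ : ℝ, x₁ ≤ x₂ → y₁ ≤ y₂ → f x₁ y₁ ≤ f x₂ y₂)
    (g : Set V → ℝ)
    (hg : ∀ N N' : Set V, N ⊆ N' → g N ≤ g N')
    (α β : ℝ) (hαβ : α ≤ β)
    (G : ℕ → SimpleGraph V) (C : ℕ → Set (Sym2 V))
    (hCdistinct : ∀ t : ℕ, ∀ p ∈ C t, ¬ p.IsDiag)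
    (hfair : ∀ u v : V, u ≠ v → ∀ t : ℕ, ∃ t' ≥ t, s(u, v) ∈ C t')
    (hdel : ∀ t : ℕ, ∀ u v : V, s(u, v) ∈ C t →
      f (g ((G t).neighborSet u)) (g ((G t).neighborSet v)) < α →
      ¬ (G (t + 1)).Adj u v)
    (hkeep : ∀ t : ℕ, ∀ u v : V, s(u, v) ∈ C t →
      α ≤ f (g ((G t).neighborSet u)) (g ((G t).neighborSet v)) →
      f (g ((G t).neighborSet u)) (g ((G t).neighborSet v)) < β →
      ((G (t + 1)).Adj u v ↔ (G t).Adj u v))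
    (hadd : ∀ t : ℕ, ∀ u v : V, s(u, v) ∈ C t →
      β ≤ f (g ((G t).neighborSet u)) (g ((G t).neighborSet v)) →
      (G (t + 1)).Adj u v)
    (hstay : ∀ t : ℕ, ∀ u v : V, s(u, v) ∉ C t →
      ((G (t + 1)).Adj u v ↔ (G t).Adj u v)) :
    ∃ t : ℕ, ∀ t' ≥ t, G t' = G t := by
  classical
  by_contra hstab
  push_neg at hstab
  -- one-step changes happen arbitrarily late
  have hstep : ∀ T, ∃ t, T ≤ t ∧ G (t+1) ≠ G t := by
    intro T
    by_contra hno
    push_neg at hno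
    have hconst : ∀ t', T ≤ t' → G t' = G T := by
      intro t' ht'
      induction t', ht' using Nat.le_induction with
      | base => rfl
      | succ n hn ih => rw [hno n hn, ih]
    obtain ⟨t', ht', hne⟩ := hstab T
    exact hne (hconst t' ht')
  have hpair : ∀ T, ∃ t, T ≤ t ∧ ∃ p : V × V, chgE G t p.1 p.2 := by
    intro T
    obtain ⟨t, ht, hne⟩ := hstep T
    refine ⟨t, ht, ?_⟩
    by_contra hno
    push_neg at hno
    apply hne
    ext u v
    exact not_not.mp (hno (u, v))
  -- scheduled/field lemmas
  have hsched : ∀ t (u v : V), chgE G t u v → s(u, v) ∈ C t := by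
    intro t u v hc
    by_contra hns
    exact hc (hstay t u v hns)
  have hdel_field : ∀ t (u v : V), delE G t u v →
      f (g ((G t).neighborSet u)) (g ((G t).neighborSet v)) < α := by
    intro t u v hd
    have hmem := hsched t u v (fun hiff => hd.2 (hiff.mpr hd.1))
    by_contra hge
    push_neg at hge
    rcases lt_or_ge (f (g ((G t).neighborSet u)) (g ((G t).neighborSet v))) β with hlt | hge2
    · exact hd.2 ((hkeep t u v hmem hge hlt).mpr hd.1)
    · exact hd.2 (hadd t u v hmem hge2)
  have hadd_field : ∀ t (u v : V), addE G t u v →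
      β ≤ f (g ((G t).neighborSet u)) (g ((G t).neighborSet v)) := by
    intro t u v ha
    have hmem := hsched t u v (fun hiff => ha.1 (hiff.mp ha.2))
    by_contra hlt
    push_neg at hlt
    rcases lt_or_ge (f (g ((G t).neighborSet u)) (g ((G t).neighborSet v))) α with h1 | h2
    · exact hdel t u v hmem h1 ha.2
    · exact ha.1 ((hkeep t u v hmem h2 hlt).mp ha.2)
  -- the finite set of possible g-values
  set Vals : Finset ℝ := Finset.image (fun s : Finset V => g ↑s) Finset.univ with hValsdef
  have hValsmem : ∀ (t : ℕ) (u : V), g ((G t).neighborSet u) ∈ Vals := by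
    intro t u
    refine Finset.mem_image.mpr ⟨(Set.toFinite ((G t).neighborSet u)).toFinset,
      Finset.mem_univ _, ?_⟩
    rw [Set.Finite.coe_toFinset]
  -- eventual max of g-values at deletion events at a vertex
  have hkey : ∀ u : V, ∃ mu : ℝ,
      (∀ T, ∃ t, T ≤ t ∧ delAt G t u) →
      ((∀ T, ∃ t, T ≤ t ∧ (delAt G t u ∧ g ((G t).neighborSet u) = mu)) ∧
       (∃ T, ∀ t, T ≤ t → delAt G t u → g ((G t).neighborSet u) ≤ mu)) := by
    intro u
    by_cases hu : ∀ T, ∃ t, T ≤ t ∧ delAt G t u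
    · have hpig : ∃ w : {w // w ∈ Vals}, ∀ T, ∃ t, T ≤ t ∧
          (delAt G t u ∧ g ((G t).neighborSet u) = (w : ℝ)) := by
        apply pigeon
        intro T
        obtain ⟨t, ht, hd⟩ := hu T
        exact ⟨t, ht, ⟨⟨_, hValsmem t u⟩, hd, rfl⟩⟩
      obtain ⟨⟨w₀, hw₀V⟩, hw₀⟩ := hpig
      set S : Finset ℝ := Vals.filter
        (fun w => ∀ T, ∃ t, T ≤ t ∧ (delAt G t u ∧ g ((G t).neighborSet u) = w)) with hSdef
      have hSne : S.Nonempty := ⟨w₀, Finset.mem_filter.mpr ⟨hw₀V, hw₀⟩⟩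
      refine ⟨S.max' hSne, fun _ => ⟨(Finset.mem_filter.mp (S.max'_mem hSne)).2, ?_⟩⟩
      have hq : ∀ i : {w // w ∈ Vals}, ∃ T, ∀ t, T ≤ t →
          ((i : ℝ) ∉ S → ¬ (delAt G t u ∧ g ((G t).neighborSet u) = (i : ℝ))) := by
        intro i
        by_cases hiS : (i : ℝ) ∈ S
        · exact ⟨0, fun t _ hni => (hni hiS).elim⟩
        · have hnio : ¬ ∀ T, ∃ t, T ≤ t ∧
              (delAt G t u ∧ g ((G t).neighborSet u) = (i : ℝ)) :=
            fun hio => hiS (Finset.mem_filter.mpr ⟨i.2, hio⟩)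
          push_neg at hnio
          obtain ⟨T, hT⟩ := hnio
          exact ⟨T, fun t ht _ hpair2 => hT t ht hpair2.1 hpair2.2⟩
      obtain ⟨T, hT⟩ := evAll hq
      refine ⟨T, fun t ht hd => ?_⟩
      have hmemS : g ((G t).neighborSet u) ∈ S := by
        by_contra hnot
        exact hT t ht ⟨_, hValsmem t u⟩ hnot ⟨hd, rfl⟩
      exact Finset.le_max' S _ hmemS
    · exact ⟨0, fun h => absurd h hu⟩
  choose m hm using hkey
  -- cutoffs
  have hq1 : ∀ u : V, ∃ T, ∀ t, T ≤ t →
      ((∀ T', ∃ t', T' ≤ t' ∧ delAt G t' u) → delAt G t u →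
        g ((G t).neighborSet u) ≤ m u) := by
    intro u
    by_cases hu : ∀ T', ∃ t', T' ≤ t' ∧ delAt G t' u
    · obtain ⟨T, hT⟩ := (hm u hu).2
      exact ⟨T, fun t ht _ hd => hT t ht hd⟩
    · exact ⟨0, fun t _ hu' => (hu hu').elim⟩
  obtain ⟨Ta, hTa⟩ := evAll hq1
  have hq2 : ∀ p : V × V, ∃ T, ∀ t, T ≤ t →
      (chgE G t p.1 p.2 → ∀ T', ∃ t', T' ≤ t' ∧ chgE G t' p.1 p.2) := by
    intro p
    by_cases hio : ∀ T', ∃ t', T' ≤ t' ∧ chgE G t' p.1 p.2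
    · exact ⟨0, fun t _ _ => hio⟩
    · push_neg at hio
      obtain ⟨T, hT⟩ := hio
      exact ⟨T, fun t ht hc => (hT t ht hc).elim⟩
  obtain ⟨Tb, hTb⟩ := evAll hq2
  -- from Ta on, W is bounded by m at every vertex with infinitely many deletions
  have C1 : ∀ u : V, (∀ T, ∃ t, T ≤ t ∧ delAt G t u) → ∀ t, Ta ≤ t →
      g ((G t).neighborSet u) ≤ m u := by
    intro u hu t ht
    have hex : ∃ r, t ≤ r ∧ delAt G r u := hu t
    have hspec := Nat.find_spec hex
    have h1 : g ((G t).neighborSet u) ≤ g ((G (Nat.find hex)).neighborSet u) :=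
      WmonoRun g hg G u t (Nat.find hex) hspec.1
        (fun s h1 h2 hdel => Nat.find_min hex h2 ⟨h1, hdel⟩)
    exact h1.trans (hTa (Nat.find hex) (ht.trans hspec.1) u hu hspec.2)
  -- starting vertex with infinitely many deletions
  obtain ⟨p₀, hp₀⟩ := pigeon hpair
  have hdel₀ := io_chg_del G p₀.1 p₀.2 hp₀
  have hinf₀ : ∀ T, ∃ t, T ≤ t ∧ delAt G t p₀.1 := by
    intro T
    obtain ⟨t, ht, hd⟩ := hdel₀ T
    exact ⟨t, ht, ⟨p₀.2, hd⟩⟩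
  set A : Finset V := Finset.univ.filter (fun u => ∀ T, ∃ t, T ≤ t ∧ delAt G t u) with hAdef
  have hAne : A.Nonempty := ⟨p₀.1, Finset.mem_filter.mpr ⟨Finset.mem_univ _, hinf₀⟩⟩
  obtain ⟨ustar, hustarA, hmax⟩ := Finset.exists_max_image A m hAne
  have hustarInf : ∀ T, ∃ t, T ≤ t ∧ delAt G t ustar := (Finset.mem_filter.mp hustarA).2
  -- a late deletion at ustar at the top value m ustar
  obtain ⟨r, hrT, hdr, hWr⟩ := (hm ustar hustarInf).1 (max Ta Tb)
  obtain ⟨y, hdelEr⟩ := hdr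
  have hfield : f (g ((G r).neighborSet ustar)) (g ((G r).neighborSet y)) < α :=
    hdel_field r ustar y hdelEr
  rw [hWr] at hfield
  -- the pair (ustar, y) changes infinitely often, so edges at y are added i.o.
  have hchg_r : chgE G r ustar y := fun hiff => hdelEr.2 (hiff.mpr hdelEr.1)
  have hio_uy : ∀ T', ∃ t, T' ≤ t ∧ chgE G t ustar y :=
    hTb r (le_trans (le_max_right _ _) hrT) (ustar, y) hchg_r
  have hio_addAt : ∀ T', ∃ t, T' ≤ t ∧ addAt G t y := by
    intro T'
    obtain ⟨t, ht, ha⟩ := io_del_add G ustar y (io_chg_del G ustar y hio_uy) T'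
    exact ⟨t, ht, ⟨ustar, fun h => ha.1 h.symm, ha.2.symm⟩⟩
  -- first addition at y after r
  have hexτ : ∃ τ, r ≤ τ ∧ addAt G τ y := hio_addAt r
  have hτspec := Nat.find_spec hexτ
  set τ := Nat.find hexτ with hτdef
  have hWτy : g ((G τ).neighborSet y) ≤ g ((G r).neighborSet y) :=
    WantiRun g hg G y r τ hτspec.1 (fun s h1 h2 ha => Nat.find_min hexτ h2 ⟨h1, ha⟩)
  obtain ⟨z, haddEτ⟩ := hτspec.2
  have hβf : β ≤ f (g ((G τ).neighborSet y)) (g ((G τ).neighborSet z)) :=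
    hadd_field τ y z haddEτ
  have hzbig : m ustar < g ((G τ).neighborSet z) := by
    by_contra hle
    push_neg at hle
    have h1 : f (g ((G τ).neighborSet y)) (g ((G τ).neighborSet z)) ≤
        f (g ((G r).neighborSet y)) (m ustar) := hfmono _ _ _ _ hWτy hle
    rw [hfsym (g ((G r).neighborSet y)) (m ustar)] at h1
    linarith
  -- but z also has infinitely many deletions and τ is late: contradiction
  have hchg_τ : chgE G τ y z := fun hiff => haddEτ.1 (hiff.mp haddEτ.2)
  have hτTb : Tb ≤ τ := le_trans (le_trans (le_max_right _ _) hrT) hτspec.1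
  have hτTa : Ta ≤ τ := le_trans (le_trans (le_max_left _ _) hrT) hτspec.1
  have hio_yz : ∀ T', ∃ t, T' ≤ t ∧ chgE G t y z := hTb τ hτTb (y, z) hchg_τ
  have hinfz : ∀ T', ∃ t, T' ≤ t ∧ delAt G t z := by
    intro T'
    obtain ⟨t, ht, hd⟩ := io_chg_del G y z hio_yz T'
    exact ⟨t, ht, ⟨y, hd.1.symm, fun h => hd.2 h.symm⟩⟩
  have hzle : g ((G τ).neighborSet z) ≤ m z := C1 z hinfz τ hτTa
  have hzmax : m z ≤ m ustar := hmax z (Finset.mem_filter.mpr ⟨Finset.mem_univ _, hinfz⟩)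
  linarith
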